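/- Let W and L be positive integers, let N = W·L, and assume N ≥ 2. Then for every real ε with 0 ≤ ε < 1/2, (1 − ε) / (1 − ε·N·(L−1)/(L·(N−1))) ≥ 1 − 2·W·ε/N. -/

import Mathlib

/-- Fidelity bound in the Simple Scrambling protocol: for positive
integers W, L with N = W·L ≥ 2 and real 0 ≤ ε < 1/2,
(1 − ε)/(1 − ε·N(L−1)/(L(N−1))) ≥ 1 − 2Wε/N. -/
theorem simple_scrambling_fidelity_bound
    (W L N : ℕ) (hW : 0 < W) (hL : 0 < L) (hN : N = W * L) (hN2 : 2 ≤ N)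
    (ε : ℝ) (hε0 : 0 ≤ ε) (hε : ε < 1 / 2) :
    (1 - ε) / (1 - ε * N * ((L : ℝ) - 1) / (L * ((N : ℝ) - 1)))
      ≥ 1 - 2 * W * ε / N := by
  have hw : (1:ℝ) ≤ W := by exact_mod_cast hW
  have hl : (1:ℝ) ≤ L := by exact_mod_cast hL
  have hn2 : (2:ℝ) ≤ N := by exact_mod_cast hN2
  have hn : (N:ℝ) = W * L := by exact_mod_cast hN
  have hden : (0:ℝ) < L * ((N:ℝ) - 1) := by nlinarith
  have hkey : (N:ℝ) * ((L:ℝ) - 1) ≤ L * ((N:ℝ) - 1) := by nlinarith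
  have hle : ε * N * ((L : ℝ) - 1) / (L * ((N : ℝ) - 1)) ≤ ε := by
    rw [div_le_iff₀ hden]
    nlinarith
  have hD : 0 < 1 - ε * N * ((L : ℝ) - 1) / (L * ((N : ℝ) - 1)) := by linarith
  rw [ge_iff_le, le_div_iff₀ hD]
  have hNpos : (0:ℝ) < N := by linarith
  have h1 : (1 - 2 * (W:ℝ) * ε / N) * (1 - ε * N * ((L : ℝ) - 1) / (L * ((N : ℝ) - 1)))
      = ((N - 2 * W * ε) * (L * (N - 1) - ε * N * ((L : ℝ) - 1))) / (N * (L * (N - 1))) := by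
    have hN1 : (N:ℝ) - 1 ≠ 0 := by linarith
    field_simp
  have hwpos : (0:ℝ) ≤ (W:ℝ)*L := by positivity
  have key : 0 ≤ ε*((W:ℝ)*L + (L:ℝ) - 2) - 2*ε^2*(W:ℝ)*((L:ℝ)-1) := by
    nlinarith [mul_nonneg (mul_nonneg hε0 (by linarith : (0:ℝ) ≤ 1-2*ε))
        (mul_nonneg (by linarith : (0:ℝ) ≤ (W:ℝ)) (by linarith : (0:ℝ) ≤ (L:ℝ)-1)),
      mul_nonneg hε0 (by nlinarith : (0:ℝ) ≤ (W:ℝ) + (L:ℝ) - 2)]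
  rw [h1, div_le_iff₀ (by positivity), hn]
  nlinarith [mul_nonneg hwpos key]
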